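/- Let A be a p×p companion matrix, e = (0,...,0,1)^T, and b = (b_0,...,b_{p-1})^T. If Y_t = ∑_{r=1}^p α_r ∫_{-∞}^t e^{λ_r(t-u)} dL_u with α_r = b(λ_r)/a'(λ_r) (λ_r distinct roots of a with negative real part), then Y_t = ∫_{-∞}^∞ g(t-u) dL_u with g(t) = b^T e^{At} e · 1_{[0,∞)}(t). In the deterministic version: for any locally integrable function f, ∑_{r=1}^p α_r ∫_{-∞}^t e^{λ_r(t-u)} f(u) du = ∫_{-∞}^t b^T e^{A(t-u)} e f(u) du. -/

import Mathlib

open Matrix NormedSpace Polynomial MeasureTheory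

/-- The `p × p` companion matrix with ones on the superdiagonal and last row
`(-a_p, …, -a_1)`, where `c j = a_{p-j}`, so `a(z) = z^p + ∑ j, c j * z^j`. -/
def companion (p : ℕ) (c : Fin p → ℂ) : Matrix (Fin p) (Fin p) ℂ :=
  Matrix.of fun i j => if (i : ℕ) + 1 = p then -c j else if (j : ℕ) = (i : ℕ) + 1 then 1 else 0

section aux

attribute [local instance] Matrix.linftyOpSemiNormedRing Matrix.linftyOpNormedRing
  Matrix.linftyOpNormedAlgebra

/-- eigenvector property of the companion matrix -/
lemma companion_mulVec_eig (p : ℕ) (c : Fin p → ℂ) (lam : Fin p → ℂ)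
    (hfact : ∀ z : ℂ, z ^ p + ∑ i : Fin p, c i * z ^ (i : ℕ) = ∏ r, (z - lam r)) (r : Fin p) :
    (companion p c).mulVec (fun i => lam r ^ (i : ℕ)) = lam r • fun i : Fin p => lam r ^ (i : ℕ) := by
  funext i
  simp only [Matrix.mulVec, dotProduct, companion, Matrix.of_apply, Pi.smul_apply,
    smul_eq_mul]
  by_cases h : (i : ℕ) + 1 = p
  · simp only [h, if_true]
    have h0 : lam r ^ p + ∑ i : Fin p, c i * lam r ^ (i : ℕ) = 0 := by
      rw [hfact]
      exact Finset.prod_eq_zero (Finset.mem_univ r) (sub_self _)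
    have h1 : ∑ j : Fin p, -c j * lam r ^ (j : ℕ) = -∑ j : Fin p, c j * lam r ^ (j : ℕ) := by
      rw [← Finset.sum_neg_distrib]
      exact Finset.sum_congr rfl fun j _ => by ring
    rw [h1]
    have h2 : lam r ^ p = lam r * lam r ^ (i : ℕ) := by
      rw [← pow_succ', h]
    linear_combination -h0 + h2
  · simp only [h, if_false]
    have hlt : (i : ℕ) + 1 < p := lt_of_le_of_ne i.2 h
    rw [Finset.sum_eq_single (⟨(i : ℕ) + 1, hlt⟩ : Fin p)]
    · simp [pow_succ, mul_comm]
    · intro j _ hj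
      have : ¬((j : ℕ) = (i : ℕ) + 1) := by
        intro hc; exact hj (Fin.ext hc)
      simp [this]
    · intro hc; exact absurd (Finset.mem_univ _) hc

lemma pow_mulVec_eig {p : ℕ} (M : Matrix (Fin p) (Fin p) ℂ) (lam : ℂ) (v : Fin p → ℂ)
    (h : M.mulVec v = lam • v) (n : ℕ) : (M ^ n).mulVec v = lam ^ n • v := by
  induction n with
  | zero => simp [Matrix.one_mulVec]
  | succ n ih =>
    rw [pow_succ, ← Matrix.mulVec_mulVec, h, Matrix.mulVec_smul, ih, smul_smul, pow_succ,
      mul_comm]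

lemma exp_mulVec_eig {p : ℕ} (M : Matrix (Fin p) (Fin p) ℂ) (lam : ℂ) (v : Fin p → ℂ)
    (h : M.mulVec v = lam • v) : (exp M).mulVec v = Complex.exp lam • v := by
  let L : Matrix (Fin p) (Fin p) ℂ →ₗ[ℂ] (Fin p → ℂ) :=
    { toFun := fun N => N.mulVec v
      map_add' := fun N₁ N₂ => Matrix.add_mulVec N₁ N₂ v
      map_smul' := fun a N => Matrix.smul_mulVec a N v }
  have hL : Continuous L := L.continuous_of_finiteDimensional
  have hsum : Summable fun n : ℕ => ((n.factorial : ℂ))⁻¹ • M ^ n := expSeries_summable' M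
  have : (exp M).mulVec v = ∑' n : ℕ, ((n.factorial : ℂ))⁻¹ • (lam ^ n • v) := by
    have := (L.toContinuousLinearMap).map_tsum hsum
    simp only [exp_eq_tsum ℂ]
    refine this.trans ?_
    congr 1
    funext n
    show L (((n.factorial : ℂ))⁻¹ • M ^ n) = _
    rw [LinearMap.map_smul]
    show ((n.factorial : ℂ))⁻¹ • (M ^ n).mulVec v = _
    rw [pow_mulVec_eig M lam v h]
  rw [this]
  rw [Complex.exp_eq_exp_ℂ, exp_eq_tsum ℂ]
  rw [← Summable.tsum_smul_const]
  · congr 1; funext n; simp [smul_smul]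
  · exact expSeries_summable' lam

end aux

/-- residue identity via Lagrange interpolation -/
lemma residue_identity {p : ℕ} (lam : Fin p → ℂ) (hdist : Function.Injective lam) (i : Fin p) :
    ∑ r : Fin p, lam r ^ (i : ℕ) * Lagrange.nodalWeight Finset.univ lam r =
      if (i : ℕ) + 1 = p then 1 else 0 := by
  have hinj : Set.InjOn lam ↑(Finset.univ : Finset (Fin p)) := fun a _ b _ h => hdist h
  have hcard : (Finset.univ : Finset (Fin p)).card = p := Finset.card_univ.trans (Fintype.card_fin p)
  have hdeg : (X ^ (i : ℕ) : ℂ[X]).degree < (Finset.univ : Finset (Fin p)).card := by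
    rw [degree_X_pow, hcard]
    exact_mod_cast i.2
  have hinterp := Lagrange.eq_interpolate hinj hdeg
  have hcoeff : ∀ r : Fin p, (Lagrange.basis Finset.univ lam r).coeff (p - 1) =
      Lagrange.nodalWeight Finset.univ lam r := by
    intro r
    have hnd : (Lagrange.basis Finset.univ lam r).natDegree = p - 1 := by
      rw [Lagrange.natDegree_basis hinj (Finset.mem_univ r), hcard]
    rw [← hnd, Polynomial.coeff_natDegree]
    unfold Lagrange.basis Lagrange.nodalWeight
    rw [Polynomial.leadingCoeff_prod]
    refine Finset.prod_congr rfl fun j hj => ?_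
    have hne : lam r ≠ lam j := fun hc => (Finset.mem_erase.mp hj).1 (hdist hc).symm
    unfold Lagrange.basisDivisor
    rw [Polynomial.leadingCoeff_mul, Polynomial.leadingCoeff_C,
      (monic_X_sub_C (lam j)).leadingCoeff, mul_one]
  have := congrArg (fun q : ℂ[X] => q.coeff (p - 1)) hinterp
  simp only [Lagrange.interpolate_apply, Polynomial.finset_sum_coeff, Polynomial.coeff_C_mul,
    Polynomial.coeff_X_pow] at this
  have hip := i.2
  have hval : (if p - 1 = (i : ℕ) then (1 : ℂ) else 0) = if (i : ℕ) + 1 = p then 1 else 0 := by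
    split <;> split <;> first | rfl | (exfalso; omega)
  rw [← hval, this]
  refine Finset.sum_congr rfl fun r _ => ?_
  rw [hcoeff r]
  simp [eval_pow]

/-- the scalar kernel identity -/
lemma kernel_eq (p : ℕ) (c : Fin p → ℂ) (lam : Fin p → ℂ) (b : Fin p → ℂ)
    (hfact : ∀ z : ℂ, z ^ p + ∑ i : Fin p, c i * z ^ (i : ℕ) = ∏ r, (z - lam r))
    (hdist : Function.Injective lam) (z : ℂ) :
    dotProduct b ((exp (z • companion p c)).mulVec
        (fun i => if (i : ℕ) + 1 = p then 1 else 0)) =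
      ∑ r, (∑ i : Fin p, b i * lam r ^ (i : ℕ)) * Lagrange.nodalWeight Finset.univ lam r *
        Complex.exp (lam r * z) := by
  have hdecomp : (fun i : Fin p => if (i : ℕ) + 1 = p then (1 : ℂ) else 0) =
      ∑ r : Fin p, Lagrange.nodalWeight Finset.univ lam r • fun i : Fin p => lam r ^ (i : ℕ) := by
    funext i
    rw [Finset.sum_apply]
    simp only [Pi.smul_apply, smul_eq_mul]
    rw [← residue_identity lam hdist i]
    exact Finset.sum_congr rfl fun r _ => mul_comm _ _
  have heig : ∀ r, (z • companion p c).mulVec (fun i => lam r ^ (i : ℕ)) =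
      (lam r * z) • fun i : Fin p => lam r ^ (i : ℕ) := by
    intro r
    rw [Matrix.smul_mulVec, companion_mulVec_eig p c lam hfact r, smul_smul, mul_comm]
  rw [hdecomp]
  have hmv : (exp (z • companion p c)).mulVec
      (∑ r : Fin p, Lagrange.nodalWeight Finset.univ lam r • fun i : Fin p => lam r ^ (i : ℕ)) =
      ∑ r : Fin p, Lagrange.nodalWeight Finset.univ lam r •
        (Complex.exp (lam r * z) • fun i : Fin p => lam r ^ (i : ℕ)) := by
    rw [← Matrix.mulVecLin_apply, map_sum]
    refine Finset.sum_congr rfl fun r _ => ?_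
    rw [LinearMap.map_smul, Matrix.mulVecLin_apply, exp_mulVec_eig _ _ _ (heig r)]
  rw [hmv]
  simp only [dotProduct, Finset.sum_apply, Pi.smul_apply, smul_eq_mul, Finset.mul_sum]
  rw [Finset.sum_comm]
  refine Finset.sum_congr rfl fun r _ => ?_
  rw [Finset.sum_mul, Finset.sum_mul]
  refine Finset.sum_congr rfl fun i _ => ?_
  ring

/-- Deterministic moving-average identity: if `a(z) = ∏_r (z - λ_r)` with distinct roots of
negative real part, `α_r = b(λ_r)/a'(λ_r)`, then for a locally integrable `f` (for which the
CAR(1) integrals converge),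
`∑_r α_r ∫_{-∞}^t e^{λ_r(t-u)} f(u) du = ∫_{-∞}^t bᵀ e^{A(t-u)} e · f(u) du`. -/
theorem carma_kernel_integral (p : ℕ) (c : Fin p → ℂ) (lam : Fin p → ℂ) (b : Fin p → ℂ)
    (hfact : ∀ z : ℂ, z ^ p + ∑ i : Fin p, c i * z ^ (i : ℕ) = ∏ r, (z - lam r))
    (hdist : Function.Injective lam)
    (hneg : ∀ r, (lam r).re < 0)
    (f : ℝ → ℂ) (hf : LocallyIntegrable f) (t : ℝ)
    (hint : ∀ r, IntegrableOn (fun u : ℝ => Complex.exp (lam r * ((t - u : ℝ) : ℂ)) * f u) (Set.Iic t)) :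
    ∑ r, (∑ i : Fin p, b i * lam r ^ (i : ℕ)) /
          (derivative (∏ j, (X - C (lam j)))).eval (lam r) *
        ∫ u in Set.Iic t, Complex.exp (lam r * ((t - u : ℝ) : ℂ)) * f u =
      ∫ u in Set.Iic t,
        dotProduct b
            ((exp (((t - u : ℝ) : ℂ) • companion p c)).mulVec
              (fun i => if (i : ℕ) + 1 = p then 1 else 0)) * f u := by
  have hinj : Set.InjOn lam ↑(Finset.univ : Finset (Fin p)) := fun a _ b _ h => hdist h
  have hdiv : ∀ r : Fin p, (∑ i : Fin p, b i * lam r ^ (i : ℕ)) /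
      (derivative (∏ j, (X - C (lam j)))).eval (lam r) =
      (∑ i : Fin p, b i * lam r ^ (i : ℕ)) * Lagrange.nodalWeight Finset.univ lam r := by
    intro r
    rw [div_eq_mul_inv]
    congr 1
    rw [← Lagrange.nodal_eq, ← Lagrange.nodalWeight_eq_eval_derivative_nodal (Finset.mem_univ r)]
  calc ∑ r, (∑ i : Fin p, b i * lam r ^ (i : ℕ)) /
          (derivative (∏ j, (X - C (lam j)))).eval (lam r) *
        ∫ u in Set.Iic t, Complex.exp (lam r * ((t - u : ℝ) : ℂ)) * f u
      = ∑ r, ∫ u in Set.Iic t, (∑ i : Fin p, b i * lam r ^ (i : ℕ)) *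
          Lagrange.nodalWeight Finset.univ lam r *
          (Complex.exp (lam r * ((t - u : ℝ) : ℂ)) * f u) := by
        refine Finset.sum_congr rfl fun r _ => ?_
        rw [hdiv r, ← MeasureTheory.integral_const_mul]
    _ = ∫ u in Set.Iic t, ∑ r, (∑ i : Fin p, b i * lam r ^ (i : ℕ)) *
          Lagrange.nodalWeight Finset.univ lam r *
          (Complex.exp (lam r * ((t - u : ℝ) : ℂ)) * f u) := by
        rw [MeasureTheory.integral_finset_sum]
        intro r _
        exact (hint r).const_mul _
    _ = ∫ u in Set.Iic t,
        dotProduct b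
            ((exp (((t - u : ℝ) : ℂ) • companion p c)).mulVec
              (fun i => if (i : ℕ) + 1 = p then 1 else 0)) * f u := by
        refine MeasureTheory.integral_congr_ae (Filter.Eventually.of_forall fun u => ?_)
        dsimp only
        rw [kernel_eq p c lam b hfact hdist ((t - u : ℝ) : ℂ), Finset.sum_mul]
        refine Finset.sum_congr rfl fun r _ => ?_
        ring
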